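/- Let N ≡ 3 (mod 4), and let a, b be binary sequences of period N each with ideal two-level autocorrelation (R_a(τ) = R_b(τ) = -1 for all τ ≢ 0 mod N). Then the interleaved sequence v of period 4N with columns (a, b, L^{(N+1)/2}(ā), L^{(N+1)/2}(b)) has optimal autocorrelation: R_v(0)=4N, R_v(τ)=-4 if τ ≡ 0 (mod 4) and τ ≢ 0 (mod 4N), and R_v(τ)=0 otherwise. -/

import Mathlib

/-- Periodic cross-correlation of binary sequences of period `M`. -/
def corr (M : ℕ) (x y : ZMod M → ZMod 2) (τ : ZMod M) : ℤ :=
  ∑ t ∈ Finset.range M, (-1 : ℤ) ^ ((x (t : ZMod M)).val + (y ((t : ZMod M) + τ)).val)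

/-- 4-column interleaving: `v(4i+j)` is the `j`-th column evaluated at `i`. -/
def il4 (N : ℕ) (a b c d : ZMod N → ZMod 2) : ZMod (4 * N) → ZMod 2 :=
  fun t => if t.val % 4 = 0 then a ((t.val / 4 : ℕ) : ZMod N)
           else if t.val % 4 = 1 then b ((t.val / 4 : ℕ) : ZMod N)
           else if t.val % 4 = 2 then c ((t.val / 4 : ℕ) : ZMod N)
           else d ((t.val / 4 : ℕ) : ZMod N)

lemma eps_left : ∀ z w : ZMod 2, ((-1:ℤ))^(((1:ZMod 2) - z).val + w.val) = -(-1:ℤ)^(z.val + w.val) := by decide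
lemma eps_right : ∀ z w : ZMod 2, ((-1:ℤ))^(z.val + ((1:ZMod 2) - w).val) = -(-1:ℤ)^(z.val + w.val) := by decide
lemma eps_both : ∀ z w : ZMod 2, ((-1:ℤ))^(((1:ZMod 2) - z).val + ((1:ZMod 2) - w).val) = (-1:ℤ)^(z.val + w.val) := by decide
lemma eps_self : ∀ z : ZMod 2, ((-1:ℤ))^(z.val + z.val) = 1 := by decide

lemma corr_self_zero (M : ℕ) (x : ZMod M → ZMod 2) : corr M x x 0 = M := by
  unfold corr
  simp [eps_self]

lemma sum_range_eq_univ (N : ℕ) [NeZero N] (f : ZMod N → ℤ) :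
    ∑ i ∈ Finset.range N, f (i : ZMod N) = ∑ z : ZMod N, f z := by
  refine Finset.sum_nbij' (fun i => (i : ZMod N)) (fun z => z.val) ?_ ?_ ?_ ?_ ?_
  · intro a _; exact Finset.mem_univ _
  · intro z _; exact Finset.mem_range.2 (ZMod.val_lt z)
  · intro a ha; exact ZMod.val_cast_of_lt (Finset.mem_range.1 ha)
  · intro z _; exact ZMod.natCast_rightInverse z
  · intro a _; rfl

lemma corr_eq_univ (N : ℕ) [NeZero N] (x y : ZMod N → ZMod 2) (τ : ZMod N) :
    corr N x y τ = ∑ z : ZMod N, (-1:ℤ)^((x z).val + (y (z + τ)).val) := by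
  unfold corr; exact sum_range_eq_univ N (fun z => (-1:ℤ)^((x z).val + (y (z + τ)).val))

lemma sum_univ_shift (N : ℕ) [NeZero N] (x y : ZMod N → ZMod 2) (c1 c2 : ZMod N) :
    ∑ z : ZMod N, (-1:ℤ)^((x (z + c1)).val + (y (z + c2)).val) = corr N x y (c2 - c1) := by
  rw [corr_eq_univ]
  refine Fintype.sum_equiv (Equiv.addRight c1) _ _ fun z => ?_
  have h : z + c1 + (c2 - c1) = z + c2 := by ring
  simp only [Equiv.coe_addRight, h]

lemma inner_pos (N : ℕ) [NeZero N] (x y : ZMod N → ZMod 2) (c1 c2 : ZMod N)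
    (F : ℕ → ℤ)
    (hF : ∀ i, F i = (-1:ℤ)^((x ((i:ZMod N) + c1)).val + (y ((i:ZMod N) + c2)).val)) :
    ∑ i ∈ Finset.range N, F i = corr N x y (c2 - c1) := by
  rw [Finset.sum_congr rfl (fun i _ => hF i)]
  rw [sum_range_eq_univ N (fun z => (-1:ℤ)^((x (z + c1)).val + (y (z + c2)).val))]
  exact sum_univ_shift N x y c1 c2

lemma inner_neg (N : ℕ) [NeZero N] (x y : ZMod N → ZMod 2) (c1 c2 : ZMod N)
    (F : ℕ → ℤ)
    (hF : ∀ i, F i = -(-1:ℤ)^((x ((i:ZMod N) + c1)).val + (y ((i:ZMod N) + c2)).val)) :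
    ∑ i ∈ Finset.range N, F i = -corr N x y (c2 - c1) := by
  rw [Finset.sum_congr rfl (fun i _ => hF i), Finset.sum_neg_distrib, neg_inj]
  rw [sum_range_eq_univ N (fun z => (-1:ℤ)^((x (z + c1)).val + (y (z + c2)).val))]
  exact sum_univ_shift N x y c1 c2
lemma il4_natCast (N : ℕ) (hN0 : 0 < N) (a b c d : ZMod N → ZMod 2) (m : ℕ) :
    il4 N a b c d ((m : ℕ) : ZMod (4*N)) =
      (if m % 4 = 0 then a else if m % 4 = 1 then b else if m % 4 = 2 then c else d)
        ((m / 4 : ℕ) : ZMod N) := by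
  have h4N : 0 < 4*N := by omega
  have hval : ((m : ZMod (4*N))).val = m % (4*N) := ZMod.val_natCast _ m
  have h1 : m % (4*N) % 4 = m % 4 := Nat.mod_mod_of_dvd m ⟨N, rfl⟩
  have h2 : ((m % (4*N) / 4 : ℕ) : ZMod N) = ((m / 4 : ℕ) : ZMod N) := by
    conv_rhs => rw [← Nat.div_add_mod m (4*N)]
    have e : (4*N*(m/(4*N)) + m % (4*N))/4 = N*(m/(4*N)) + m % (4*N)/4 := by
      rw [mul_assoc, Nat.mul_add_div (by norm_num)]
    rw [e]
    push_cast
    simp [ZMod.natCast_self]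
  unfold il4
  rw [hval, h1, h2]
  split_ifs <;> rfl

lemma il4_apply (N : ℕ) (hN0 : 0 < N) (a b c d : ZMod N → ZMod 2) (m q j : ℕ)
    (hm : m = 4*q + j) (hj : j < 4) :
    il4 N a b c d ((m : ℕ) : ZMod (4*N)) =
      (if j = 0 then a else if j = 1 then b else if j = 2 then c else d) ((q : ℕ) : ZMod N) := by
  subst hm
  rw [il4_natCast N hN0]
  have h1 : (4*q+j) % 4 = j := by omega
  have h2 : (4*q+j) / 4 = q := by omega
  rw [h1, h2]

lemma corr_il4 (N : ℕ) (hN0 : 0 < N) (w : ZMod (4*N) → ZMod 2) (n : ℕ) :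
    corr (4*N) w w ((n : ℕ) : ZMod (4*N)) =
      ∑ j ∈ Finset.range 4, ∑ i ∈ Finset.range N,
        (-1:ℤ) ^ ((w ((4*i+j : ℕ) : ZMod (4*N))).val
                 + (w ((4*i+j+n : ℕ) : ZMod (4*N))).val) := by
  unfold corr
  rw [← Finset.sum_product']
  refine Finset.sum_nbij' (fun t => ((t % 4 : ℕ), (t / 4 : ℕ))) (fun p => 4*p.2 + p.1)
    ?_ ?_ ?_ ?_ ?_
  · intro t ht
    simp only [Finset.mem_product, Finset.mem_range] at *
    omega
  · intro p hp
    simp only [Finset.mem_product, Finset.mem_range] at *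
    omega
  · intro t _; show 4*(t/4) + t%4 = t; omega
  · intro p hp
    simp only [Finset.mem_product, Finset.mem_range] at hp
    simp only [Prod.ext_iff]
    constructor <;> omega
  · intro t _
    simp only
    have e1 : (4 * (t/4) + t % 4 : ℕ) = t := by omega
    rw [e1]
    congr 2
    push_cast
    ring

lemma il4_apply0 (N : ℕ) (hN0 : 0 < N) (a b c d : ZMod N → ZMod 2) (m q : ℕ)
    (hm : m = 4*q) :
    il4 N a b c d ((m : ℕ) : ZMod (4*N)) = a ((q : ℕ) : ZMod N) := by
  subst hm; rw [il4_natCast N hN0]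
  have h1 : (4*q) % 4 = 0 := by omega
  have h2 : (4*q) / 4 = q := by omega
  rw [h1, h2]; rfl

lemma il4_apply1 (N : ℕ) (hN0 : 0 < N) (a b c d : ZMod N → ZMod 2) (m q : ℕ)
    (hm : m = 4*q+1) :
    il4 N a b c d ((m : ℕ) : ZMod (4*N)) = b ((q : ℕ) : ZMod N) := by
  subst hm; rw [il4_natCast N hN0]
  have h1 : (4*q+1) % 4 = 1 := by omega
  have h2 : (4*q+1) / 4 = q := by omega
  rw [h1, h2]; rfl

lemma il4_apply2 (N : ℕ) (hN0 : 0 < N) (a b c d : ZMod N → ZMod 2) (m q : ℕ)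
    (hm : m = 4*q+2) :
    il4 N a b c d ((m : ℕ) : ZMod (4*N)) = c ((q : ℕ) : ZMod N) := by
  subst hm; rw [il4_natCast N hN0]
  have h1 : (4*q+2) % 4 = 2 := by omega
  have h2 : (4*q+2) / 4 = q := by omega
  rw [h1, h2]; rfl

lemma il4_apply3 (N : ℕ) (hN0 : 0 < N) (a b c d : ZMod N → ZMod 2) (m q : ℕ)
    (hm : m = 4*q+3) :
    il4 N a b c d ((m : ℕ) : ZMod (4*N)) = d ((q : ℕ) : ZMod N) := by
  subst hm; rw [il4_natCast N hN0]
  have h1 : (4*q+3) % 4 = 3 := by omega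
  have h2 : (4*q+3) / 4 = q := by omega
  rw [h1, h2]; rfl

lemma key0 (N : ℕ) (hN0 : 0 < N) (a b : ZMod N → ZMod 2) (h : ZMod N) (s : ℕ) :
    corr (4*N) (il4 N a b (fun i => 1 - a (i + h)) (fun i => b (i + h)))
      (il4 N a b (fun i => 1 - a (i + h)) (fun i => b (i + h))) ((4*s : ℕ) : ZMod (4*N)) =
    2 * corr N a a ((s : ZMod N)) + 2 * corr N b b ((s : ZMod N)) := by
  haveI : NeZero N := ⟨by omega⟩
  set c : ZMod N → ZMod 2 := fun i => 1 - a (i + h) with hc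
  set d : ZMod N → ZMod 2 := fun i => b (i + h) with hd
  rw [corr_il4 N hN0]
  simp only [Finset.sum_range_succ, Finset.sum_range_zero, zero_add]
  have S0 : ∑ i ∈ Finset.range N, (-1:ℤ)^((il4 N a b c d ((4*i+0 : ℕ):ZMod (4*N))).val
      + (il4 N a b c d ((4*i+0+4*s : ℕ):ZMod (4*N))).val) = corr N a a ((s:ZMod N) - 0) := by
    refine inner_pos N a a 0 ((s:ZMod N)) _ (fun i => ?_)
    rw [il4_apply0 N hN0 a b c d _ i (by ring), il4_apply0 N hN0 a b c d _ (i+s) (by ring)]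
    simp only [Nat.cast_add, add_zero]
  have S1 : ∑ i ∈ Finset.range N, (-1:ℤ)^((il4 N a b c d ((4*i+1 : ℕ):ZMod (4*N))).val
      + (il4 N a b c d ((4*i+1+4*s : ℕ):ZMod (4*N))).val) = corr N b b ((s:ZMod N) - 0) := by
    refine inner_pos N b b 0 ((s:ZMod N)) _ (fun i => ?_)
    rw [il4_apply1 N hN0 a b c d _ i (by ring), il4_apply1 N hN0 a b c d _ (i+s) (by ring)]
    simp only [Nat.cast_add, add_zero]
  have S2 : ∑ i ∈ Finset.range N, (-1:ℤ)^((il4 N a b c d ((4*i+2 : ℕ):ZMod (4*N))).val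
      + (il4 N a b c d ((4*i+2+4*s : ℕ):ZMod (4*N))).val) = corr N a a ((s:ZMod N) + h - h) := by
    refine inner_pos N a a h ((s:ZMod N) + h) _ (fun i => ?_)
    rw [il4_apply2 N hN0 a b c d _ i (by ring), il4_apply2 N hN0 a b c d _ (i+s) (by ring)]
    simp only [hc, eps_both, Nat.cast_add, add_assoc]
  have S3 : ∑ i ∈ Finset.range N, (-1:ℤ)^((il4 N a b c d ((4*i+3 : ℕ):ZMod (4*N))).val
      + (il4 N a b c d ((4*i+3+4*s : ℕ):ZMod (4*N))).val) = corr N b b ((s:ZMod N) + h - h) := by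
    refine inner_pos N b b h ((s:ZMod N) + h) _ (fun i => ?_)
    rw [il4_apply3 N hN0 a b c d _ i (by ring), il4_apply3 N hN0 a b c d _ (i+s) (by ring)]
    simp only [hd, Nat.cast_add, add_assoc]
  rw [S0, S1, S2, S3]
  have e1 : (s:ZMod N) - 0 = (s:ZMod N) := by ring
  have e2 : (s:ZMod N) + h - h = (s:ZMod N) := by ring
  rw [e1, e2]
  ring

lemma key1 (N : ℕ) (hN0 : 0 < N) (a b : ZMod N → ZMod 2) (h : ZMod N) (hh : h + h = 1) (s : ℕ) :
    corr (4*N) (il4 N a b (fun i => 1 - a (i + h)) (fun i => b (i + h)))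
      (il4 N a b (fun i => 1 - a (i + h)) (fun i => b (i + h))) ((4*s+1 : ℕ) : ZMod (4*N)) = 0 := by
  haveI : NeZero N := ⟨by omega⟩
  set c : ZMod N → ZMod 2 := fun i => 1 - a (i + h) with hc
  set d : ZMod N → ZMod 2 := fun i => b (i + h) with hd
  rw [corr_il4 N hN0]
  simp only [Finset.sum_range_succ, Finset.sum_range_zero, zero_add]
  have S0 : ∑ i ∈ Finset.range N, (-1:ℤ)^((il4 N a b c d ((4*i+0 : ℕ):ZMod (4*N))).val
      + (il4 N a b c d ((4*i+0+(4*s+1) : ℕ):ZMod (4*N))).val) = corr N a b ((s:ZMod N) - 0) := by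
    refine inner_pos N a b 0 ((s:ZMod N)) _ (fun i => ?_)
    rw [il4_apply0 N hN0 a b c d _ i (by ring), il4_apply1 N hN0 a b c d _ (i+s) (by ring)]
    simp only [Nat.cast_add, add_zero]
  have S1 : ∑ i ∈ Finset.range N, (-1:ℤ)^((il4 N a b c d ((4*i+1 : ℕ):ZMod (4*N))).val
      + (il4 N a b c d ((4*i+1+(4*s+1) : ℕ):ZMod (4*N))).val) = -corr N b a ((s:ZMod N) + h - 0) := by
    refine inner_neg N b a 0 ((s:ZMod N) + h) _ (fun i => ?_)
    rw [il4_apply1 N hN0 a b c d _ i (by ring), il4_apply2 N hN0 a b c d _ (i+s) (by ring)]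
    simp only [hc, eps_right, Nat.cast_add, add_zero, add_assoc]
  have S2 : ∑ i ∈ Finset.range N, (-1:ℤ)^((il4 N a b c d ((4*i+2 : ℕ):ZMod (4*N))).val
      + (il4 N a b c d ((4*i+2+(4*s+1) : ℕ):ZMod (4*N))).val) = -corr N a b ((s:ZMod N) + h - h) := by
    refine inner_neg N a b h ((s:ZMod N) + h) _ (fun i => ?_)
    rw [il4_apply2 N hN0 a b c d _ i (by ring), il4_apply3 N hN0 a b c d _ (i+s) (by ring)]
    simp only [hc, hd, eps_left, Nat.cast_add, add_assoc]
  have S3 : ∑ i ∈ Finset.range N, (-1:ℤ)^((il4 N a b c d ((4*i+3 : ℕ):ZMod (4*N))).val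
      + (il4 N a b c d ((4*i+3+(4*s+1) : ℕ):ZMod (4*N))).val) = corr N b a ((s:ZMod N) + 1 - h) := by
    refine inner_pos N b a h ((s:ZMod N) + 1) _ (fun i => ?_)
    rw [il4_apply3 N hN0 a b c d _ i (by ring), il4_apply0 N hN0 a b c d _ (i+s+1) (by ring)]
    simp only [hd, Nat.cast_add, Nat.cast_one, add_assoc]
  rw [S0, S1, S2, S3]
  have e1 : (s:ZMod N) - 0 = (s:ZMod N) := by ring
  have e2 : (s:ZMod N) + h - h = (s:ZMod N) := by ring
  have e3 : (s:ZMod N) + h - 0 = (s:ZMod N) + h := by ring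
  have e4 : (s:ZMod N) + 1 - h = (s:ZMod N) + h := by linear_combination -hh
  rw [e1, e2, e3, e4]
  ring

lemma corr_eq_of_two_level (N : ℕ) (a b : ZMod N → ZMod 2)
    (ha : ∀ τ : ZMod N, τ ≠ 0 → corr N a a τ = -1)
    (hb : ∀ τ : ZMod N, τ ≠ 0 → corr N b b τ = -1) (σ : ZMod N) :
    corr N a a σ = corr N b b σ := by
  by_cases hσ : σ = 0
  · subst hσ; rw [corr_self_zero, corr_self_zero]
  · rw [ha σ hσ, hb σ hσ]

lemma key2 (N : ℕ) (hN0 : 0 < N) (a b : ZMod N → ZMod 2) (h : ZMod N) (hh : h + h = 1)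
    (ha : ∀ τ : ZMod N, τ ≠ 0 → corr N a a τ = -1)
    (hb : ∀ τ : ZMod N, τ ≠ 0 → corr N b b τ = -1) (s : ℕ) :
    corr (4*N) (il4 N a b (fun i => 1 - a (i + h)) (fun i => b (i + h)))
      (il4 N a b (fun i => 1 - a (i + h)) (fun i => b (i + h))) ((4*s+2 : ℕ) : ZMod (4*N)) = 0 := by
  haveI : NeZero N := ⟨by omega⟩
  set c : ZMod N → ZMod 2 := fun i => 1 - a (i + h) with hc
  set d : ZMod N → ZMod 2 := fun i => b (i + h) with hd
  rw [corr_il4 N hN0]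
  simp only [Finset.sum_range_succ, Finset.sum_range_zero, zero_add]
  have S0 : ∑ i ∈ Finset.range N, (-1:ℤ)^((il4 N a b c d ((4*i+0 : ℕ):ZMod (4*N))).val
      + (il4 N a b c d ((4*i+0+(4*s+2) : ℕ):ZMod (4*N))).val) = -corr N a a ((s:ZMod N) + h - 0) := by
    refine inner_neg N a a 0 ((s:ZMod N) + h) _ (fun i => ?_)
    rw [il4_apply0 N hN0 a b c d _ i (by ring), il4_apply2 N hN0 a b c d _ (i+s) (by ring)]
    simp only [hc, eps_right, Nat.cast_add, add_zero, add_assoc]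
  have S1 : ∑ i ∈ Finset.range N, (-1:ℤ)^((il4 N a b c d ((4*i+1 : ℕ):ZMod (4*N))).val
      + (il4 N a b c d ((4*i+1+(4*s+2) : ℕ):ZMod (4*N))).val) = corr N b b ((s:ZMod N) + h - 0) := by
    refine inner_pos N b b 0 ((s:ZMod N) + h) _ (fun i => ?_)
    rw [il4_apply1 N hN0 a b c d _ i (by ring), il4_apply3 N hN0 a b c d _ (i+s) (by ring)]
    simp only [hd, Nat.cast_add, add_zero, add_assoc]
  have S2 : ∑ i ∈ Finset.range N, (-1:ℤ)^((il4 N a b c d ((4*i+2 : ℕ):ZMod (4*N))).val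
      + (il4 N a b c d ((4*i+2+(4*s+2) : ℕ):ZMod (4*N))).val) = -corr N a a ((s:ZMod N) + 1 - h) := by
    refine inner_neg N a a h ((s:ZMod N) + 1) _ (fun i => ?_)
    rw [il4_apply2 N hN0 a b c d _ i (by ring), il4_apply0 N hN0 a b c d _ (i+s+1) (by ring)]
    simp only [hc, eps_left, Nat.cast_add, Nat.cast_one, add_assoc]
  have S3 : ∑ i ∈ Finset.range N, (-1:ℤ)^((il4 N a b c d ((4*i+3 : ℕ):ZMod (4*N))).val
      + (il4 N a b c d ((4*i+3+(4*s+2) : ℕ):ZMod (4*N))).val) = corr N b b ((s:ZMod N) + 1 - h) := by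
    refine inner_pos N b b h ((s:ZMod N) + 1) _ (fun i => ?_)
    rw [il4_apply3 N hN0 a b c d _ i (by ring), il4_apply1 N hN0 a b c d _ (i+s+1) (by ring)]
    simp only [hd, Nat.cast_add, Nat.cast_one, add_assoc]
  rw [S0, S1, S2, S3]
  have e3 : (s:ZMod N) + h - 0 = (s:ZMod N) + h := by ring
  have e4 : (s:ZMod N) + 1 - h = (s:ZMod N) + h := by linear_combination -hh
  rw [e3, e4, corr_eq_of_two_level N a b ha hb ((s:ZMod N) + h)]
  ring

lemma key3 (N : ℕ) (hN0 : 0 < N) (a b : ZMod N → ZMod 2) (h : ZMod N) (hh : h + h = 1) (s : ℕ) :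
    corr (4*N) (il4 N a b (fun i => 1 - a (i + h)) (fun i => b (i + h)))
      (il4 N a b (fun i => 1 - a (i + h)) (fun i => b (i + h))) ((4*s+3 : ℕ) : ZMod (4*N)) = 0 := by
  haveI : NeZero N := ⟨by omega⟩
  set c : ZMod N → ZMod 2 := fun i => 1 - a (i + h) with hc
  set d : ZMod N → ZMod 2 := fun i => b (i + h) with hd
  rw [corr_il4 N hN0]
  simp only [Finset.sum_range_succ, Finset.sum_range_zero, zero_add]
  have S0 : ∑ i ∈ Finset.range N, (-1:ℤ)^((il4 N a b c d ((4*i+0 : ℕ):ZMod (4*N))).val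
      + (il4 N a b c d ((4*i+0+(4*s+3) : ℕ):ZMod (4*N))).val) = corr N a b ((s:ZMod N) + h - 0) := by
    refine inner_pos N a b 0 ((s:ZMod N) + h) _ (fun i => ?_)
    rw [il4_apply0 N hN0 a b c d _ i (by ring), il4_apply3 N hN0 a b c d _ (i+s) (by ring)]
    simp only [hd, Nat.cast_add, add_zero, add_assoc]
  have S1 : ∑ i ∈ Finset.range N, (-1:ℤ)^((il4 N a b c d ((4*i+1 : ℕ):ZMod (4*N))).val
      + (il4 N a b c d ((4*i+1+(4*s+3) : ℕ):ZMod (4*N))).val) = corr N b a ((s:ZMod N) + 1 - 0) := by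
    refine inner_pos N b a 0 ((s:ZMod N) + 1) _ (fun i => ?_)
    rw [il4_apply1 N hN0 a b c d _ i (by ring), il4_apply0 N hN0 a b c d _ (i+s+1) (by ring)]
    simp only [Nat.cast_add, Nat.cast_one, add_zero, add_assoc]
  have S2 : ∑ i ∈ Finset.range N, (-1:ℤ)^((il4 N a b c d ((4*i+2 : ℕ):ZMod (4*N))).val
      + (il4 N a b c d ((4*i+2+(4*s+3) : ℕ):ZMod (4*N))).val) = -corr N a b ((s:ZMod N) + 1 - h) := by
    refine inner_neg N a b h ((s:ZMod N) + 1) _ (fun i => ?_)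
    rw [il4_apply2 N hN0 a b c d _ i (by ring), il4_apply1 N hN0 a b c d _ (i+s+1) (by ring)]
    simp only [hc, eps_left, Nat.cast_add, Nat.cast_one, add_assoc]
  have S3 : ∑ i ∈ Finset.range N, (-1:ℤ)^((il4 N a b c d ((4*i+3 : ℕ):ZMod (4*N))).val
      + (il4 N a b c d ((4*i+3+(4*s+3) : ℕ):ZMod (4*N))).val) = -corr N b a ((s:ZMod N) + 1 + h - h) := by
    refine inner_neg N b a h ((s:ZMod N) + 1 + h) _ (fun i => ?_)
    rw [il4_apply3 N hN0 a b c d _ i (by ring), il4_apply2 N hN0 a b c d _ (i+s+1) (by ring)]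
    simp only [hc, hd, eps_right, Nat.cast_add, Nat.cast_one, add_assoc]
  rw [S0, S1, S2, S3]
  have e1 : (s:ZMod N) + h - 0 = (s:ZMod N) + h := by ring
  have e2 : (s:ZMod N) + 1 - 0 = (s:ZMod N) + 1 := by ring
  have e3 : (s:ZMod N) + 1 - h = (s:ZMod N) + h := by linear_combination -hh
  have e4 : (s:ZMod N) + 1 + h - h = (s:ZMod N) + 1 := by ring
  rw [e1, e2, e3, e4]
  ring


theorem stmt_14 (N : ℕ) (hN : N % 4 = 3) (a b : ZMod N → ZMod 2)
    (ha : ∀ τ : ZMod N, τ ≠ 0 → corr N a a τ = -1)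
    (hb : ∀ τ : ZMod N, τ ≠ 0 → corr N b b τ = -1)
    (v : ZMod (4 * N) → ZMod 2)
    (hv : v = il4 N a b (fun i => 1 - a (i + (((N + 1) / 2 : ℕ) : ZMod N)))
                        (fun i => b (i + (((N + 1) / 2 : ℕ) : ZMod N)))) :
    corr (4 * N) v v 0 = 4 * N ∧
    (∀ τ : ℤ, (τ : ZMod (4 * N)) ≠ 0 →
      ((4 : ℤ) ∣ τ → corr (4 * N) v v (τ : ZMod (4 * N)) = -4) ∧
      (¬ (4 : ℤ) ∣ τ → corr (4 * N) v v (τ : ZMod (4 * N)) = 0)) := by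
  have hN0 : 0 < N := by omega
  haveI : NeZero N := ⟨by omega⟩
  haveI : NeZero (4*N) := ⟨by omega⟩
  have hh : (((N + 1) / 2 : ℕ) : ZMod N) + (((N + 1) / 2 : ℕ) : ZMod N) = 1 := by
    have e : (N+1)/2 + (N+1)/2 = N + 1 := by omega
    rw [← Nat.cast_add, e]
    push_cast
    simp [ZMod.natCast_self]
  constructor
  · rw [corr_self_zero]
    push_cast
    ring
  · intro τ hτ
    set n := (τ : ZMod (4*N)).val with hn
    have hcast : ((n : ℕ) : ZMod (4*N)) = (τ : ZMod (4*N)) := ZMod.natCast_rightInverse _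
    have hdvd : ((4*N : ℕ) : ℤ) ∣ (τ - (n:ℤ)) := by
      rw [← ZMod.intCast_zmod_eq_zero_iff_dvd]
      push_cast
      rw [hcast]
      ring
    have h4 : (4:ℤ) ∣ (τ - (n:ℤ)) := dvd_trans ⟨(N:ℤ), by push_cast; ring⟩ hdvd
    constructor
    · intro hτ4
      have h4n : 4 ∣ n := by omega
      obtain ⟨s, hs⟩ := h4n
      have hsne : ((s:ZMod N)) ≠ 0 := by
        intro h0
        obtain ⟨k, hk⟩ := (ZMod.natCast_eq_zero_iff s N).1 h0
        apply hτ
        rw [← hcast, hs, hk]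
        rw [show 4*(N*k) = (4*N)*k by ring, Nat.cast_mul, ZMod.natCast_self, zero_mul]
      rw [← hcast, hs, hv, key0 N hN0 a b _ s, ha _ hsne, hb _ hsne]
      ring
    · intro hτ4
      have h4n : ¬ (4 ∣ n) := by omega
      have hcases : n % 4 = 1 ∨ n % 4 = 2 ∨ n % 4 = 3 := by omega
      rw [← hcast, hv]
      rcases hcases with h1 | h2 | h3
      · rw [show n = 4*(n/4)+1 by omega, key1 N hN0 a b _ hh (n/4)]
      · rw [show n = 4*(n/4)+2 by omega, key2 N hN0 a b _ hh ha hb (n/4)]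
      · rw [show n = 4*(n/4)+3 by omega, key3 N hN0 a b _ hh (n/4)]
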